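/- Let μ be a finite Borel measure on ℝ supported on [0, ∞) and β > 0. Suppose φ : (-∞, β] → ℂ is continuous, (real-)analytic on the open half-line (-∞, β), and satisfies φ(x) = ∫ e^{xλ} dμ(λ) for every x ≤ 0. Then λ ↦ e^{βλ} belongs to L¹(μ), and φ(x) = ∫ e^{xλ} dμ(λ) for every x ∈ (-∞, β]. -/

import Mathlib

open MeasureTheory Filter Topology ENNReal

namespace LaplaceAux

variable {μ : Measure ℝ}

lemma ae_nonneg (hsupp : μ (Set.Iio (0 : ℝ)) = 0) : ∀ᵐ l ∂μ, 0 ≤ l := by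
  rw [ae_iff]
  convert hsupp using 2
  ext l; simp [not_le]

lemma meas_exp (x : ℝ) : AEStronglyMeasurable (fun l : ℝ => Real.exp (x * l)) μ :=
  (Real.continuous_exp.comp (continuous_const.mul continuous_id)).aestronglyMeasurable

lemma meas_pow_exp (x : ℝ) (n : ℕ) :
    AEStronglyMeasurable (fun l : ℝ => l ^ n * Real.exp (x * l)) μ :=
  ((continuous_pow n).mul (Real.continuous_exp.comp (continuous_const.mul continuous_id))).aestronglyMeasurable

lemma integrable_exp_of_le (hae : ∀ᵐ l ∂μ, 0 ≤ l) {x y : ℝ}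
    (hy : Integrable (fun l => Real.exp (y * l)) μ) (hxy : x ≤ y) :
    Integrable (fun l => Real.exp (x * l)) μ := by
  refine hy.mono' (meas_exp x) ?_
  filter_upwards [hae] with l hl
  rw [Real.norm_eq_abs, abs_of_nonneg (Real.exp_nonneg _)]
  exact Real.exp_le_exp.2 (mul_le_mul_of_nonneg_right hxy hl)

lemma hasSum_exp_series (a : ℝ) :
    HasSum (fun n : ℕ => a ^ n / n.factorial) (Real.exp a) := by
  rw [Real.exp_eq_exp_ℝ]
  exact NormedSpace.expSeries_div_hasSum_exp a

lemma pow_div_factorial_le_exp {a : ℝ} (ha : 0 ≤ a) (n : ℕ) :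
    a ^ n / n.factorial ≤ Real.exp a :=
  le_hasSum (hasSum_exp_series a) n (fun m _ => by positivity)

lemma integrable_pow_mul_exp (hae : ∀ᵐ l ∂μ, 0 ≤ l) {x y : ℝ}
    (hy : Integrable (fun l => Real.exp (y * l)) μ) (hxy : x < y) (n : ℕ) :
    Integrable (fun l : ℝ => l ^ n * Real.exp (x * l)) μ := by
  refine ((hy.const_mul ((n.factorial : ℝ) / (y - x) ^ n)).mono' (meas_pow_exp x n)) ?_
  filter_upwards [hae] with l hl
  have h1 : ((y - x) * l) ^ n / n.factorial ≤ Real.exp ((y - x) * l) :=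
    pow_div_factorial_le_exp (by nlinarith) n
  have h2 : l ^ n ≤ (n.factorial : ℝ) / (y - x) ^ n * Real.exp ((y - x) * l) := by
    rw [mul_pow] at h1
    have hyx : (0:ℝ) < (y - x) ^ n := pow_pos (by linarith) n
    have hf : (0:ℝ) < (n.factorial : ℝ) := by exact_mod_cast n.factorial_pos
    rw [div_mul_eq_mul_div, le_div_iff₀ hyx]
    calc l ^ n * (y - x) ^ n = (y-x)^n * l^n := by ring
    _ ≤ n.factorial * Real.exp ((y - x) * l) := by
        rw [div_le_iff₀ hf] at h1; linarith
  rw [Real.norm_eq_abs, abs_of_nonneg (by positivity)]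
  calc l ^ n * Real.exp (x * l) ≤ ((n.factorial : ℝ) / (y - x) ^ n * Real.exp ((y - x) * l)) * Real.exp (x * l) :=
        mul_le_mul_of_nonneg_right h2 (Real.exp_nonneg _)
  _ = (n.factorial : ℝ) / (y - x) ^ n * Real.exp (y * l) := by
        rw [mul_assoc, ← Real.exp_add]; ring_nf

/-- Pointwise expansion: `∑ tⁿ/n! · (lⁿ e^{xl}) = e^{(x+t)l}`, valid for all reals. -/
lemma hasSum_exp_term (t l x : ℝ) :
    HasSum (fun n : ℕ => t ^ n / n.factorial * (l ^ n * Real.exp (x * l)))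
      (Real.exp ((x + t) * l)) := by
  have h := (hasSum_exp_series (t * l)).mul_right (Real.exp (x * l))
  have : Real.exp ((x + t) * l) = Real.exp (t * l) * Real.exp (x * l) := by
    rw [← Real.exp_add]; ring_nf
  rw [this]
  convert h using 1
  · rfl
  funext n
  rw [mul_pow]
  ring

/-- ENNReal version for nonnegative `u`, `l`. -/
lemma tsum_ofReal_exp {u l : ℝ} (x : ℝ) (hu : 0 ≤ u) (hl : 0 ≤ l) :
    ∑' n : ℕ, ENNReal.ofReal (u ^ n / n.factorial * (l ^ n * Real.exp (x * l)))
      = ENNReal.ofReal (Real.exp ((x + u) * l)) := by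
  rw [← ENNReal.ofReal_tsum_of_nonneg (fun n => by positivity)
      (hasSum_exp_term u l x).summable]
  rw [(hasSum_exp_term u l x).tsum_eq]

lemma lintegral_exp_lt_top (hae : ∀ᵐ l ∂μ, 0 ≤ l) {y : ℝ}
    (hy : Integrable (fun l => Real.exp (y * l)) μ) {s : ℝ} (hs : s ≤ y) :
    ∫⁻ l, ENNReal.ofReal (Real.exp (s * l)) ∂μ < ∞ := by
  have hint : Integrable (fun l => Real.exp (s * l)) μ := by
    refine hy.mono' ((Real.continuous_exp.comp (continuous_const.mul continuous_id)).aestronglyMeasurable) ?_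
    filter_upwards [hae] with l hl
    rw [Real.norm_eq_abs, abs_of_nonneg (Real.exp_nonneg _)]
    exact Real.exp_le_exp.2 (mul_le_mul_of_nonneg_right hs hl)
  rw [← ofReal_integral_eq_lintegral_ofReal hint (ae_of_all _ fun l => Real.exp_nonneg _)]
  exact ENNReal.ofReal_lt_top

lemma tsum_lintegral_ne_top (hae : ∀ᵐ l ∂μ, 0 ≤ l) {x y : ℝ}
    (hy : Integrable (fun l => Real.exp (y * l)) μ)
    {u : ℝ} (hu : 0 ≤ u) (huy : x + u ≤ y) :
    ∑' n : ℕ, ∫⁻ l, ENNReal.ofReal (u ^ n / n.factorial * (l ^ n * Real.exp (x * l))) ∂μ ≠ ∞ := by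
  have hmeas : ∀ n : ℕ, Measurable fun l : ℝ =>
      ENNReal.ofReal (u ^ n / n.factorial * (l ^ n * Real.exp (x * l))) := by
    intro n
    exact (measurable_const.mul ((measurable_id.pow_const n).mul
      ((Real.continuous_exp.comp (continuous_const.mul continuous_id)).measurable))).ennreal_ofReal
  rw [← lintegral_tsum (fun n => (hmeas n).aemeasurable)]
  have hcongr : ∫⁻ l, ∑' n : ℕ, ENNReal.ofReal (u ^ n / n.factorial * (l ^ n * Real.exp (x * l))) ∂μ
      = ∫⁻ l, ENNReal.ofReal (Real.exp ((x + u) * l)) ∂μ := by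
    refine lintegral_congr_ae ?_
    filter_upwards [hae] with l hl
    exact tsum_ofReal_exp x hu hl
  rw [hcongr]
  exact (lintegral_exp_lt_top hae hy huy).ne

lemma hasSum_integral (hae : ∀ᵐ l ∂μ, 0 ≤ l) {x y : ℝ}
    (hy : Integrable (fun l => Real.exp (y * l)) μ) {t : ℝ} (ht : |t| < y - x) :
    HasSum (fun n : ℕ => t ^ n / n.factorial * ∫ l, l ^ n * Real.exp (x * l) ∂μ)
      (∫ l, Real.exp ((x + t) * l) ∂μ) := by
  set f : ℕ → ℝ → ℝ := fun n l => t ^ n / n.factorial * (l ^ n * Real.exp (x * l)) with hf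
  have hmeas : ∀ n, AEStronglyMeasurable (f n) μ :=
    fun n => (meas_pow_exp (μ := μ) x n).const_mul _
  have hnorm : ∀ n, ∫⁻ l, ‖f n l‖₊ ∂μ
      = ∫⁻ l, ENNReal.ofReal (|t| ^ n / n.factorial * (l ^ n * Real.exp (x * l))) ∂μ := by
    intro n
    refine lintegral_congr_ae ?_
    filter_upwards [hae] with l hl
    rw [← enorm_eq_nnnorm, ← ofReal_norm]
    congr 1
    rw [hf]
    simp only [Real.norm_eq_abs, abs_mul, abs_div, abs_pow, abs_of_nonneg hl,
      abs_of_nonneg (Real.exp_nonneg _), Nat.abs_cast]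
  have hbound : ∑' n, ∫⁻ l, ‖f n l‖₊ ∂μ ≠ ∞ := by
    rw [funext hnorm]
    exact tsum_lintegral_ne_top hae hy (abs_nonneg t) (by linarith)
  have hswap := integral_tsum hmeas hbound
  have hpt : ∀ l, ∑' n, f n l = Real.exp ((x + t) * l) := fun l => (hasSum_exp_term t l x).tsum_eq
  have hsummable : Summable fun n => ∫ l, f n l ∂μ := by
    refine Summable.of_norm_bounded (ENNReal.summable_toReal hbound) fun n => ?_
    calc ‖∫ l, f n l ∂μ‖ ≤ (∫⁻ l, ENNReal.ofReal ‖f n l‖ ∂μ).toReal := norm_integral_le_lintegral_norm _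
    _ = (∫⁻ l, (‖f n l‖₊ : ℝ≥0∞) ∂μ).toReal := by
        congr 1; exact lintegral_congr fun l => ofReal_norm _
  have htsum : ∑' n, ∫ l, f n l ∂μ = ∫ l, Real.exp ((x + t) * l) ∂μ := by
    rw [← hswap]
    exact integral_congr_ae (ae_of_all _ hpt)
  have hterm : ∀ n, ∫ l, f n l ∂μ = t ^ n / n.factorial * ∫ l, l ^ n * Real.exp (x * l) ∂μ :=
    fun n => MeasureTheory.integral_const_mul _ _
  have h := (Summable.hasSum_iff hsummable).2 htsum
  simpa only [hterm] using h
/-- The candidate power series of the Laplace transform at `x`. -/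
noncomputable def lseries (μ : Measure ℝ) (x : ℝ) : FormalMultilinearSeries ℝ ℝ ℂ := fun n =>
  ContinuousMultilinearMap.mkPiRing ℝ (Fin n)
    (((∫ l, l ^ n * Real.exp (x * l) ∂μ : ℝ) : ℂ) / n.factorial)

lemma lseries_apply (x : ℝ) (n : ℕ) (z : ℝ) :
    (lseries μ x n) (fun _ => z)
      = ((z ^ n * (∫ l, l ^ n * Real.exp (x * l) ∂μ) / n.factorial : ℝ) : ℂ) := by
  simp only [lseries, ContinuousMultilinearMap.mkPiRing_apply, Finset.prod_const,
    Finset.card_univ, Fintype.card_fin]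
  rw [Complex.real_smul]
  push_cast
  ring

lemma norm_lseries (hae : ∀ᵐ l ∂μ, 0 ≤ l) (x : ℝ) (n : ℕ) :
    ‖lseries μ x n‖ = (∫ l, l ^ n * Real.exp (x * l) ∂μ) / n.factorial := by
  have hg : 0 ≤ ∫ l, l ^ n * Real.exp (x * l) ∂μ := by
    refine integral_nonneg_of_ae ?_
    filter_upwards [hae] with l hl
    positivity
  rw [lseries, ContinuousMultilinearMap.norm_mkPiRing, norm_div]
  rw [Complex.norm_real, Real.norm_eq_abs, abs_of_nonneg hg]
  norm_num

lemma hasFPowerSeries (hae : ∀ᵐ l ∂μ, 0 ≤ l) {x y : ℝ}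
    (hy : Integrable (fun l => Real.exp (y * l)) μ) (hxy : x < y) :
    HasFPowerSeriesOnBall (fun s : ℝ => ((∫ l, Real.exp (s * l) ∂μ : ℝ) : ℂ))
      (lseries μ x) x (ENNReal.ofReal (y - x)) := by
  constructor
  · -- r_le
    refine ENNReal.le_of_forall_nnreal_lt fun r hr => ?_
    refine FormalMultilinearSeries.le_radius_of_summable_norm _ ?_
    have hrlt : (r : ℝ) < y - x := by
      rw [← ENNReal.ofReal_coe_nnreal] at hr
      exact (ENNReal.ofReal_lt_ofReal_iff_of_nonneg r.coe_nonneg).1 hr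
    have h := (hasSum_integral hae hy (t := (r : ℝ))
      (by rwa [abs_of_nonneg r.coe_nonneg])).summable
    refine h.congr fun n => ?_
    rw [norm_lseries hae]
    ring
  · exact ENNReal.ofReal_pos.2 (by linarith)
  · intro z hz
    rw [EMetric.mem_ball, edist_zero_right] at hz
    have hzlt : |z| < y - x := by
      rw [← ofReal_norm] at hz
      rw [← Real.norm_eq_abs]
      exact (ENNReal.ofReal_lt_ofReal_iff_of_nonneg (norm_nonneg z)).1 hz
    have h := hasSum_integral hae hy hzlt
    have h2 := (Complex.ofRealCLM : ℝ →L[ℝ] ℂ).hasSum h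
    have heq : (fun n : ℕ => (lseries μ x n) fun _ => z)
        = fun n : ℕ => Complex.ofRealCLM (z ^ n / n.factorial * ∫ l, l ^ n * Real.exp (x * l) ∂μ) := by
      funext n
      rw [lseries_apply]
      simp only [Complex.ofRealCLM_apply]
      push_cast
      ring
    rw [heq]
    exact h2

lemma integrable_exp_add_of_summable (hae : ∀ᵐ l ∂μ, 0 ≤ l) {x t : ℝ} (ht : 0 ≤ t)
    (hint : ∀ n, Integrable (fun l : ℝ => l ^ n * Real.exp (x * l)) μ)
    (hsum : Summable fun n : ℕ => t ^ n / n.factorial * ∫ l, l ^ n * Real.exp (x * l) ∂μ) :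
    Integrable (fun l : ℝ => Real.exp ((x + t) * l)) μ := by
  refine ⟨meas_exp (μ := μ) _, ?_⟩
  rw [hasFiniteIntegral_iff_norm]
  have hnorm : ∫⁻ l, ENNReal.ofReal ‖Real.exp ((x + t) * l)‖ ∂μ
      = ∫⁻ l, ENNReal.ofReal (Real.exp ((x + t) * l)) ∂μ := by
    refine lintegral_congr fun l => ?_
    rw [Real.norm_eq_abs, abs_of_nonneg (Real.exp_nonneg _)]
  rw [hnorm]
  have hmeas : ∀ n : ℕ, Measurable fun l : ℝ =>
      ENNReal.ofReal (t ^ n / n.factorial * (l ^ n * Real.exp (x * l))) := fun n =>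
    (measurable_const.mul ((measurable_id.pow_const n).mul
      ((Real.continuous_exp.comp (continuous_const.mul continuous_id)).measurable))).ennreal_ofReal
  have hcongr : ∫⁻ l, ENNReal.ofReal (Real.exp ((x + t) * l)) ∂μ
      = ∫⁻ l, ∑' n : ℕ, ENNReal.ofReal (t ^ n / n.factorial * (l ^ n * Real.exp (x * l))) ∂μ := by
    refine lintegral_congr_ae ?_
    filter_upwards [hae] with l hl
    exact (tsum_ofReal_exp x ht hl).symm
  rw [hcongr, lintegral_tsum (fun n => (hmeas n).aemeasurable)]
  have hterm : ∀ n : ℕ, ∫⁻ l, ENNReal.ofReal (t ^ n / n.factorial * (l ^ n * Real.exp (x * l))) ∂μ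
      = ENNReal.ofReal (t ^ n / n.factorial * ∫ l, l ^ n * Real.exp (x * l) ∂μ) := by
    intro n
    rw [← MeasureTheory.integral_const_mul]
    rw [← ofReal_integral_eq_lintegral_ofReal ((hint n).const_mul _)]
    filter_upwards [hae] with l hl
    positivity
  rw [funext hterm, ← ENNReal.ofReal_tsum_of_nonneg ?_ hsum]
  · exact ENNReal.ofReal_lt_top
  · intro n
    have hg : 0 ≤ ∫ l, l ^ n * Real.exp (x * l) ∂μ := by
      refine integral_nonneg_of_ae ?_
      filter_upwards [hae] with l hl
      positivity
    positivity

lemma endpoint (hae : ∀ᵐ l ∂μ, 0 ≤ l) (c : ℝ)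
    (hc : ∀ x : ℝ, x < c → Integrable (fun l => Real.exp (x * l)) μ) (φc : ℂ)
    (hφ : Tendsto (fun x : ℝ => ((∫ l, Real.exp (x * l) ∂μ : ℝ) : ℂ)) (𝓝[<] c) (𝓝 φc)) :
    Integrable (fun l => Real.exp (c * l)) μ ∧ φc = ((∫ l, Real.exp (c * l) ∂μ : ℝ) : ℂ) := by
  set M : ℝ → ℝ := fun x => ∫ l, Real.exp (x * l) ∂μ with hM
  set xs : ℕ → ℝ := fun n => c - 1 / (n + 1) with hxs
  have hx_lt : ∀ n, xs n < c := by
    intro n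
    have : (0:ℝ) < 1 / (n + 1) := by positivity
    simp only [hxs]; linarith
  have hx_tend : Tendsto xs atTop (𝓝 c) := by
    have h := tendsto_one_div_add_atTop_nhds_zero_nat (𝕜 := ℝ)
    have h2 := tendsto_const_nhds (x := c) (f := atTop (α := ℕ)) |>.sub h
    simp only [sub_zero] at h2
    exact h2
  have hx_mono : Monotone xs := by
    intro m n hmn
    simp only [hxs]
    have h1 : (1:ℝ) / (n + 1) ≤ 1 / (m + 1) := by
      apply one_div_le_one_div_of_le (by positivity)
      have : (m:ℝ) ≤ n := by exact_mod_cast hmn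
      linarith
    linarith
  have hx_tend' : Tendsto xs atTop (𝓝[<] c) :=
    tendsto_nhdsWithin_of_tendsto_nhds_of_eventually_within _ hx_tend
      (Eventually.of_forall hx_lt)
  have hseq : Tendsto (fun n => ((M (xs n) : ℝ) : ℂ)) atTop (𝓝 φc) := hφ.comp hx_tend'
  -- Beppo Levi
  have hBL : Tendsto (fun n => ∫⁻ l, ENNReal.ofReal (Real.exp (xs n * l)) ∂μ) atTop
      (𝓝 (∫⁻ l, ENNReal.ofReal (Real.exp (c * l)) ∂μ)) := by
    refine lintegral_tendsto_of_tendsto_of_monotone ?_ ?_ ?_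
    · intro n
      exact ((Real.continuous_exp.comp (continuous_const.mul continuous_id)).measurable).ennreal_ofReal.aemeasurable
    · filter_upwards [hae] with l hl
      intro m n hmn
      exact ENNReal.ofReal_le_ofReal (Real.exp_le_exp.2 (mul_le_mul_of_nonneg_right (hx_mono hmn) hl))
    · refine ae_of_all _ fun l => ?_
      exact (ENNReal.continuous_ofReal.tendsto _).comp
        ((Real.continuous_exp.tendsto _).comp ((hx_tend.mul_const l)))
  have hML : ∀ n, ∫⁻ l, ENNReal.ofReal (Real.exp (xs n * l)) ∂μ = ENNReal.ofReal (M (xs n)) :=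
    fun n => (ofReal_integral_eq_lintegral_ofReal (hc _ (hx_lt n))
      (ae_of_all _ fun l => Real.exp_nonneg _)).symm
  have hre : Tendsto (fun n => M (xs n)) atTop (𝓝 φc.re) := by
    have := (Complex.continuous_re.tendsto _).comp hseq
    simpa [Function.comp_def] using this
  have h2 : Tendsto (fun n => ∫⁻ l, ENNReal.ofReal (Real.exp (xs n * l)) ∂μ) atTop
      (𝓝 (ENNReal.ofReal φc.re)) := by
    rw [funext hML]
    exact (ENNReal.continuous_ofReal.tendsto _).comp hre
  have hkey : ∫⁻ l, ENNReal.ofReal (Real.exp (c * l)) ∂μ = ENNReal.ofReal φc.re :=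
    tendsto_nhds_unique hBL h2
  have hint : Integrable (fun l => Real.exp (c * l)) μ := by
    refine ⟨meas_exp (μ := μ) c, ?_⟩
    rw [hasFiniteIntegral_iff_norm]
    have : ∫⁻ l, ENNReal.ofReal ‖Real.exp (c * l)‖ ∂μ = ∫⁻ l, ENNReal.ofReal (Real.exp (c * l)) ∂μ := by
      refine lintegral_congr fun l => ?_
      rw [Real.norm_eq_abs, abs_of_nonneg (Real.exp_nonneg _)]
    rw [this, hkey]
    exact ENNReal.ofReal_lt_top
  have hre0 : 0 ≤ φc.re := by
    refine ge_of_tendsto hre ?_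
    refine Eventually.of_forall fun n => ?_
    refine integral_nonneg fun l => Real.exp_nonneg _
  have hMc : M c = φc.re := by
    have h3 := ofReal_integral_eq_lintegral_ofReal hint (ae_of_all _ fun l => Real.exp_nonneg _)
    rw [hkey] at h3
    have hM0 : 0 ≤ M c := integral_nonneg fun l => Real.exp_nonneg _
    exact (ENNReal.ofReal_eq_ofReal_iff hM0 hre0).1 h3
  have him : φc.im = 0 := by
    have h4 : Tendsto (fun n => ((M (xs n) : ℝ) : ℂ).im) atTop (𝓝 φc.im) :=
      (Complex.continuous_im.tendsto _).comp hseq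
    have h5 : Tendsto (fun _ : ℕ => (0:ℝ)) atTop (𝓝 φc.im) := by simpa using h4
    simpa using tendsto_nhds_unique h5 tendsto_const_nhds
  refine ⟨hint, ?_⟩
  apply Complex.ext
  · simp [← hMc]; rfl
  · simp [him]

end LaplaceAux

open LaplaceAux MeasureTheory

/-- Analytic-continuation step of the Sublemma: let `μ` be a finite Borel measure on `ℝ`
supported on `[0, ∞)` and `β > 0`. If `φ : ℝ → ℂ` is continuous on `(-∞, β]`, real-analytic
on `(-∞, β)`, and `φ(x) = ∫ e^{xλ} dμ(λ)` for all `x ≤ 0`, then `λ ↦ e^{βλ}` is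
`μ`-integrable and `φ(x) = ∫ e^{xλ} dμ(λ)` for all `x ≤ β`. -/
theorem analytic_continuation_of_laplace_transform
    (μ : Measure ℝ) [IsFiniteMeasure μ] (hsupp : μ (Set.Iio (0 : ℝ)) = 0)
    (β : ℝ) (hβ : 0 < β) (φ : ℝ → ℂ)
    (hcont : ContinuousOn φ (Set.Iic β))
    (hanal : AnalyticOnNhd ℝ φ (Set.Iio β))
    (hval : ∀ x : ℝ, x ≤ 0 → φ x = ((∫ l : ℝ, Real.exp (x * l) ∂μ : ℝ) : ℂ)) :
    Integrable (fun l : ℝ => Real.exp (β * l)) μ ∧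
    ∀ x : ℝ, x ≤ β → φ x = ((∫ l : ℝ, Real.exp (x * l) ∂μ : ℝ) : ℂ) := by
  have hae : ∀ᵐ l ∂μ, 0 ≤ l := ae_nonneg hsupp
  set F : ℝ → ℂ := fun s => ((∫ l, Real.exp (s * l) ∂μ : ℝ) : ℂ) with hF
  set S : Set ℝ := {x | x ≤ β ∧ Integrable (fun l => Real.exp (x * l)) μ} with hS
  have h0S : (0:ℝ) ∈ S := by
    refine ⟨hβ.le, ?_⟩
    have : (fun l : ℝ => Real.exp (0 * l)) = fun _ : ℝ => (1:ℝ) := by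
      funext l; simp
    rw [this]
    exact integrable_const 1
  have hSne : S.Nonempty := ⟨0, h0S⟩
  have hSbdd : BddAbove S := ⟨β, fun x hx => hx.1⟩
  set b : ℝ := sSup S with hb
  have h0b : (0:ℝ) ≤ b := le_csSup hSbdd h0S
  have hbβ : b ≤ β := csSup_le hSne fun x hx => hx.1
  have hb_int : ∀ x : ℝ, x < b → Integrable (fun l => Real.exp (x * l)) μ := by
    intro x hx
    obtain ⟨y, hyS, hxy⟩ := exists_lt_of_lt_csSup hSne hx
    exact integrable_exp_of_le hae hyS.2 hxy.le
  -- F is analytic on Iio b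
  have hFanal : AnalyticOnNhd ℝ F (Set.Iio b) := by
    intro x hx
    obtain ⟨y, hyS, hxy⟩ := exists_lt_of_lt_csSup hSne hx
    exact (hasFPowerSeries hae hyS.2 hxy).hasFPowerSeriesAt.analyticAt
  have hφanal' : AnalyticOnNhd ℝ φ (Set.Iio b) :=
    hanal.mono fun x hx => lt_of_lt_of_le hx hbβ
  -- identity theorem on Iio b
  have hEq : Set.EqOn φ F (Set.Iio b) := by
    refine hφanal'.eqOn_of_preconnected_of_eventuallyEq hFanal isPreconnected_Iio
      (z₀ := -1) (by simp only [Set.mem_Iio]; linarith) ?_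
    refine eventually_of_mem (Iio_mem_nhds (show (-1:ℝ) < 0 by norm_num)) ?_
    intro x hx
    exact hval x (le_of_lt hx)
  -- b = β
  have hbeq : b = β := by
    by_contra hne
    have hlt : b < β := lt_of_le_of_ne hbβ hne
    -- integrability at b via continuity of φ at b
    have hφb : ContinuousAt φ b := (hanal b hlt).continuousAt
    have htend : Tendsto F (𝓝[<] b) (𝓝 (φ b)) := by
      refine Tendsto.congr' ?_ (hφb.continuousWithinAt (s := Set.Iio b))
      filter_upwards [self_mem_nhdsWithin] with x hx
      exact hEq hx
    obtain ⟨hPb, -⟩ := endpoint hae b hb_int (φ b) htend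
    -- power series of φ at b
    obtain ⟨p, r, hpr⟩ := hanal b hlt
    set r₁ : ℝ≥0∞ := min r (ENNReal.ofReal (β - b)) with hr₁
    have hr₁pos : 0 < r₁ := lt_min hpr.r_pos (ENNReal.ofReal_pos.2 (by linarith))
    have hr₁ne : r₁ ≠ ∞ := ne_top_of_le_ne_top ENNReal.ofReal_ne_top (min_le_right _ _)
    have hpr1 : HasFPowerSeriesOnBall φ p b r₁ := hpr.mono hr₁pos (min_le_left _ _)
    set ε : ℝ := r₁.toReal / 4 with hε
    have hεpos : 0 < ε := by
      have := ENNReal.toReal_pos hr₁pos.ne' hr₁ne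
      positivity
    have hr₁eq : r₁ = ENNReal.ofReal (4 * ε) := by
      rw [hε]
      rw [show 4 * (r₁.toReal / 4) = r₁.toReal by ring]
      exact (ENNReal.ofReal_toReal hr₁ne).symm
    -- change origin to x0 = b - ε
    have hnorm : (‖(-ε : ℝ)‖₊ : ℝ≥0∞) = ENNReal.ofReal ε := by
      rw [← enorm_eq_nnnorm, ← ofReal_norm]
      simp [abs_of_pos hεpos]
    have hεlt : (‖(-ε : ℝ)‖₊ : ℝ≥0∞) < r₁ := by
      rw [hnorm, hr₁eq]
      exact ENNReal.ofReal_lt_ofReal_iff_of_nonneg hεpos.le |>.2 (by linarith)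
    have hco := hpr1.changeOrigin hεlt
    have hx0 : b + (-ε) = b - ε := by ring
    rw [hx0] at hco
    have hrad : ENNReal.ofReal (3 * ε) ≤ (p.changeOrigin (-ε)).radius := by
      refine le_trans ?_ hco.r_le
      rw [hnorm, hr₁eq, ← ENNReal.ofReal_sub _ hεpos.le]
      exact ENNReal.ofReal_le_ofReal (by linarith)
    -- φ has the lseries power series at b - ε
    have hx0lt : b - ε < b := by linarith
    have hFx0 : HasFPowerSeriesAt F (lseries μ (b - ε)) (b - ε) := by
      have := hasFPowerSeries hae hPb hx0lt
      exact this.hasFPowerSeriesAt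
    have hφx0 : HasFPowerSeriesAt φ (lseries μ (b - ε)) (b - ε) := by
      refine hFx0.congr ?_
      refine eventually_of_mem (Iio_mem_nhds hx0lt) ?_
      intro x hx
      exact (hEq hx).symm
    have huniq : p.changeOrigin (-ε) = lseries μ (b - ε) :=
      hco.hasFPowerSeriesAt.eq_formalMultilinearSeries hφx0
    rw [huniq] at hrad
    -- summability at radius 2ε
    have h2ε : ((2 * ε : ℝ).toNNReal : ℝ≥0∞) < (lseries μ (b - ε)).radius := by
      refine lt_of_lt_of_le ?_ hrad
      have heq : ENNReal.ofReal (2 * ε) = (((2 * ε : ℝ).toNNReal) : ℝ≥0∞) := rfl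
      rw [← heq]
      exact (ENNReal.ofReal_lt_ofReal_iff_of_nonneg (by positivity)).2 (by linarith)
    have hsumnorm := (lseries μ (b - ε)).summable_norm_mul_pow h2ε
    have hsum : Summable fun n : ℕ =>
        (2 * ε) ^ n / n.factorial * ∫ l, l ^ n * Real.exp ((b - ε) * l) ∂μ := by
      refine hsumnorm.congr fun n => ?_
      rw [norm_lseries hae, Real.coe_toNNReal _ (by positivity)]
      ring
    have hext := integrable_exp_add_of_summable hae (by positivity : (0:ℝ) ≤ 2 * ε)
      (fun n => integrable_pow_mul_exp hae hPb hx0lt n) hsum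
    have hxe : b - ε + 2 * ε = b + ε := by ring
    rw [hxe] at hext
    have hmem : b + ε ∈ S := by
      refine ⟨?_, hext⟩
      have h4 : 4 * ε ≤ β - b := by
        have := min_le_right r (ENNReal.ofReal (β - b))
        rw [← hr₁, hr₁eq] at this
        have := (ENNReal.ofReal_le_ofReal_iff (by linarith)).1 this
        linarith
      linarith
    have := le_csSup hSbdd hmem
    rw [← hb] at this
    linarith
  -- conclusion
  rw [hbeq] at hb_int hEq
  have htendβ : Tendsto F (𝓝[<] β) (𝓝 (φ β)) := by
    have hcw : ContinuousWithinAt φ (Set.Iic β) β := hcont β (le_refl β)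
    have : Tendsto φ (𝓝[<] β) (𝓝 (φ β)) :=
      hcw.mono_left (nhdsWithin_mono _ Set.Iio_subset_Iic_self)
    refine Tendsto.congr' ?_ this
    filter_upwards [self_mem_nhdsWithin] with x hx
    exact hEq hx
  obtain ⟨hintβ, hvalβ⟩ := endpoint hae β hb_int (φ β) htendβ
  refine ⟨hintβ, fun x hx => ?_⟩
  rcases lt_or_eq_of_le hx with h | h
  · exact hEq h
  · rw [h]; exact hvalβ
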